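/- Let b > 0 and let y = (y_1, y_2, y_3, y_4) ∈ ℕ⁴ with y_1 - y_3 = b, and set n = y_1 + y_2 + y_3 + y_4. With k(y) the number of lattice paths from the origin to y all of whose points except y satisfy x_1 - x_3 < b, and k_3*(y) the number of such paths starting from e_3 = (0,0,1,0), the identity b · (n-1) · k_3*(y) = (b+1) · y_3 · k(y) holds; equivalently, k_3*(y)/k(y) = ((b+1)/b) · y_3/(n-1). -/

import Mathlib

open scoped Classical

/-- Number of lattice paths from `a` to `x`, each step adding one standard
basis vector, all of whose points (including the endpoints) lie in `A`. -/
noncomputable def pathCount {k : ℕ} (A : Set (Fin k → ℕ)) (a : Fin k → ℕ)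
    (x : Fin k → ℕ) : ℕ :=
  if x = a then (if a ∈ A then 1 else 0)
  else if x ∈ A then
    ∑ i : Fin k, if h : 0 < x i then pathCount A a (Function.update x i (x i - 1)) else 0
  else 0
termination_by ∑ i, x i
decreasing_by
  have h1 := Finset.sum_update_of_mem (Finset.mem_univ i) x (x i - 1)
  have h2 := Finset.sum_eq_sum_sdiff_singleton_add (Finset.mem_univ i) x
  omega

section aux
variable {K : ℕ} {A : Set (Fin K → ℕ)} {a : Fin K → ℕ}

lemma pathCount_self (h : a ∈ A) : pathCount A a a = 1 := by
  rw [pathCount]; simp [h]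

lemma pathCount_of_not_mem {x : Fin K → ℕ} (h : x ∉ A) : pathCount A a x = 0 := by
  rw [pathCount]; split_ifs with h1 h2 <;> simp_all

lemma pathCount_rec {x : Fin K → ℕ} (hxa : x ≠ a) (hx : x ∈ A) :
    pathCount A a x =
      ∑ i : Fin K, if _ : 0 < x i then pathCount A a (Function.update x i (x i - 1)) else 0 := by
  rw [pathCount]; rw [if_neg hxa, if_pos hx]

lemma update_sub_le (x : Fin K → ℕ) (i : Fin K) :
    Function.update x i (x i - 1) ≤ x := by
  intro j
  rcases eq_or_ne j i with rfl | hne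
  · rw [Function.update_self]; exact Nat.sub_le _ _
  · rw [Function.update_of_ne hne]

lemma sum_update_sub (x : Fin K → ℕ) (i : Fin K) (h : 0 < x i) :
    ∑ k, Function.update x i (x i - 1) k = (∑ k, x k) - 1 := by
  have h1 := Finset.sum_update_of_mem (Finset.mem_univ i) x (x i - 1)
  have h2 := Finset.sum_eq_sum_sdiff_singleton_add (Finset.mem_univ i) x
  omega

lemma sum_pos_of_coord (x : Fin K → ℕ) (i : Fin K) (h : 0 < x i) : 0 < ∑ k, x k :=
  lt_of_lt_of_le h (Finset.single_le_sum (fun _ _ => Nat.zero_le _) (Finset.mem_univ i))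

lemma pathCount_eq_zero_of_lt (j : Fin K) :
    ∀ t (x : Fin K → ℕ), (∑ i, x i) = t → x j < a j → pathCount A a x = 0 := by
  intro t
  induction t using Nat.strong_induction_on with
  | _ t IH =>
    intro x ht hj
    have hxa : x ≠ a := by rintro rfl; omega
    by_cases hx : x ∈ A
    · rw [pathCount_rec hxa hx]
      apply Finset.sum_eq_zero
      intro i _
      split_ifs with hi
      · have hpos := sum_pos_of_coord x i hi
        have hs : ∑ k, Function.update x i (x i - 1) k = t - 1 := by
          rw [sum_update_sub x i hi]; omega
        refine IH (t-1) (by omega) _ hs ?_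
        exact lt_of_le_of_lt (update_sub_le x i j) hj
      · rfl
    · exact pathCount_of_not_mem hx

lemma pathCount_insert_of_not_le {y : Fin K → ℕ} :
    ∀ t (x : Fin K → ℕ), (∑ i, x i) = t → ¬ y ≤ x →
      pathCount (insert y A) a x = pathCount A a x := by
  intro t
  induction t using Nat.strong_induction_on with
  | _ t IH =>
    intro x ht hyx
    have hxy : x ≠ y := by rintro rfl; exact hyx le_rfl
    have hmem : x ∈ insert y A ↔ x ∈ A := by
      simp [Set.mem_insert_iff, hxy]
    by_cases hxa : x = a
    · subst hxa
      rw [pathCount, pathCount]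
      simp only [if_pos rfl]
      split_ifs with h1 h2 h2 <;> simp_all
    · by_cases hx : x ∈ A
      · rw [pathCount_rec hxa (hmem.2 hx), pathCount_rec hxa hx]
        apply Finset.sum_congr rfl
        intro i _
        split_ifs with hi
        · have hpos := sum_pos_of_coord x i hi
          have hs : ∑ k, Function.update x i (x i - 1) k = t - 1 := by
            rw [sum_update_sub x i hi]; omega
          refine IH (t-1) (by omega) _ hs ?_
          exact fun hle => hyx (le_trans hle (update_sub_le x i))
        · rfl
      · rw [pathCount_of_not_mem hx, pathCount_of_not_mem (by rwa [hmem])]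
end aux

lemma le_update_of_lt {K : ℕ} {x a : Fin K → ℕ} (hax : a ≤ x) (i : Fin K) (h : a i < x i) :
    a ≤ Function.update x i (x i - 1) := by
  intro j
  rcases eq_or_ne j i with rfl | hne
  · rw [Function.update_self]; exact Nat.le_sub_one_of_lt h
  · rw [Function.update_of_ne hne]; exact hax j

lemma funext_fin4 {f g : Fin 4 → ℕ} (e0 : f 0 = g 0) (e1 : f 1 = g 1)
    (e2 : f 2 = g 2) (e3 : f 3 = g 3) : f = g := by
  funext j; fin_cases j <;> assumption

lemma le_fin4 {f g : Fin 4 → ℕ} (e0 : f 0 ≤ g 0) (e1 : f 1 ≤ g 1)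
    (e2 : f 2 ≤ g 2) (e3 : f 3 ≤ g 3) : f ≤ g := by
  intro j; fin_cases j <;> assumption

/-- The closed-form count. -/
def Fcnt (c u p d q : ℕ) : ℤ :=
  (Nat.choose (u+p+d+q) (u+d) : ℤ) * (Nat.choose (p+q) p : ℤ)
    * ((Nat.choose (u+d) u : ℤ) - (Nat.choose (u+d) (d+c) : ℤ))

lemma zeros_pascal (p q : ℕ) (h : 0 < p + q) :
    (if 0 < p then (Nat.choose (p+q-1) (p-1) : ℤ) else 0)
      + (if 0 < q then (Nat.choose (p+q-1) p : ℤ) else 0)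
    = (Nat.choose (p+q) p : ℤ) := by
  rcases p with _ | p <;> rcases q with _ | q
  · omega
  · simp
  · simp
  · rw [if_pos (by omega), if_pos (by omega)]
    have e1 : p + 1 + (q+1) - 1 = p + q + 1 := by omega
    have e2 : p + 1 + (q+1) = (p + q + 1) + 1 := by omega
    have e3 : p + 1 - 1 = p := by omega
    rw [e1, e2, e3, Nat.choose_succ_succ (p+q+1) p]
    push_cast; ring

lemma pm_pascal (c u d : ℕ) (hc : 0 < c) (hud : u < d + c) (hm : 0 < u + d) :
    (if 0 < u then (Nat.choose (u+d-1) (u-1) : ℤ) - (Nat.choose (u+d-1) (d+c) : ℤ) else 0)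
      + (if 0 < d then (Nat.choose (u+d-1) u : ℤ) - (Nat.choose (u+d-1) (d-1+c) : ℤ) else 0)
    = (Nat.choose (u+d) u : ℤ) - (Nat.choose (u+d) (d+c) : ℤ) := by
  rcases u with _ | u <;> rcases d with _ | d
  · omega
  · -- u = 0, d = d+1
    rw [if_neg (by omega), if_pos (by omega)]
    have e1 : 0 + (d+1) - 1 = d := by omega
    have e2 : 0 + (d+1) = d + 1 := by omega
    have e3 : d + 1 - 1 + c = d + c := by omega
    rw [e1, e2, e3]
    have z1 : Nat.choose d (d+c) = 0 := Nat.choose_eq_zero_of_lt (by omega)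
    have z2 : Nat.choose (d+1) (d+1+c) = 0 := Nat.choose_eq_zero_of_lt (by omega)
    simp [z1, z2]
  · -- u = u+1, d = 0
    rw [if_pos (by omega), if_neg (by omega)]
    have e1 : u + 1 + 0 - 1 = u := by omega
    have e2 : u + 1 + 0 = u + 1 := by omega
    rw [e1, e2]
    have z1 : Nat.choose u c = 0 := Nat.choose_eq_zero_of_lt (by omega)
    have z2 : Nat.choose (u+1) c = 0 := Nat.choose_eq_zero_of_lt (by omega)
    simp [z1, z2]
  · -- both succ
    rw [if_pos (by omega), if_pos (by omega)]
    have e1 : u + 1 + (d+1) - 1 = u + d + 1 := by omega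
    have e2 : u + 1 + (d+1) = (u + d + 1) + 1 := by omega
    have e3 : u + 1 - 1 = u := by omega
    have e4 : d + 1 - 1 + c = d + c := by omega
    have e5 : d + 1 + c = (d + c) + 1 := by omega
    rw [e1, e2, e3, e4, e5, Nat.choose_succ_succ (u+d+1) u,
      Nat.choose_succ_succ (u+d+1) (d+c)]
    push_cast; ring

lemma key_identity (c u p d q : ℕ) (hc : 0 < c) (hud : u < d + c)
    (hpos : 0 < u + p + d + q) :
    (if 0 < u then Fcnt c (u-1) p d q else 0)
      + (if 0 < p then Fcnt c u (p-1) d q else 0)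
      + (if 0 < d then Fcnt c u p (d-1) q else 0)
      + (if 0 < q then Fcnt c u p d (q-1) else 0)
    = Fcnt c u p d q := by
  have hT0 : (if 0 < u then Fcnt c (u-1) p d q else 0)
      = (Nat.choose (u+d+(p+q)-1) (u+d-1) : ℤ) * (Nat.choose (p+q) p : ℤ)
        * (if 0 < u then (Nat.choose (u+d-1) (u-1) : ℤ) - (Nat.choose (u+d-1) (d+c) : ℤ) else 0) := by
    split_ifs with h
    · unfold Fcnt
      have e1 : u - 1 + p + d + q = u + d + (p+q) - 1 := by omega
      have e2 : u - 1 + d = u + d - 1 := by omega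
      rw [e1, e2]; try ring
    · ring
  have hT2 : (if 0 < d then Fcnt c u p (d-1) q else 0)
      = (Nat.choose (u+d+(p+q)-1) (u+d-1) : ℤ) * (Nat.choose (p+q) p : ℤ)
        * (if 0 < d then (Nat.choose (u+d-1) u : ℤ) - (Nat.choose (u+d-1) (d-1+c) : ℤ) else 0) := by
    split_ifs with h
    · unfold Fcnt
      have e1 : u + p + (d-1) + q = u + d + (p+q) - 1 := by omega
      have e2 : u + (d - 1) = u + d - 1 := by omega
      rw [e1, e2]; try ring
    · ring
  have hT1 : (if 0 < p then Fcnt c u (p-1) d q else 0)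
      = (Nat.choose (u+d+(p+q)-1) (u+d) : ℤ)
        * (if 0 < p then (Nat.choose (p+q-1) (p-1) : ℤ) else 0)
        * ((Nat.choose (u+d) u : ℤ) - (Nat.choose (u+d) (d+c) : ℤ)) := by
    split_ifs with h
    · unfold Fcnt
      have e1 : u + (p-1) + d + q = u + d + (p+q) - 1 := by omega
      have e2 : p - 1 + q = p + q - 1 := by omega
      rw [e1, e2]; try ring
    · ring
  have hT3 : (if 0 < q then Fcnt c u p d (q-1) else 0)
      = (Nat.choose (u+d+(p+q)-1) (u+d) : ℤ)
        * (if 0 < q then (Nat.choose (p+q-1) p : ℤ) else 0)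
        * ((Nat.choose (u+d) u : ℤ) - (Nat.choose (u+d) (d+c) : ℤ)) := by
    split_ifs with h
    · unfold Fcnt
      have e1 : u + p + d + (q-1) = u + d + (p+q) - 1 := by omega
      have e2 : p + (q - 1) = p + q - 1 := by omega
      rw [e1, e2]; try ring
    · ring
  rw [hT0, hT1, hT2, hT3]
  unfold Fcnt
  rw [show u + p + d + q = u + d + (p + q) from by omega]
  rcases Nat.eq_zero_or_pos (u + d) with hm0 | hm0
  · -- u = d = 0
    obtain rfl : u = 0 := by omega
    obtain rfl : d = 0 := by omega
    have hs0 : 0 < p + q := by omega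
    simp only [lt_self_iff_false, if_false, zero_add, add_zero,
      Nat.choose_zero_right, Nat.choose_self, Nat.choose_eq_zero_of_lt hc]
    push_cast
    linear_combination zeros_pascal p q hs0
  · rcases Nat.eq_zero_or_pos (p + q) with hs0 | hs0
    · -- p = q = 0
      obtain rfl : p = 0 := by omega
      obtain rfl : q = 0 := by omega
      simp only [lt_self_iff_false, if_false, zero_add, add_zero,
        Nat.choose_zero_right, Nat.choose_self]
      push_cast
      linear_combination pm_pascal c u d hc hud hm0
    · -- both positive: Pascal on the outer choose
      have hP : Nat.choose (u+d+(p+q)) (u+d)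
          = Nat.choose (u+d+(p+q)-1) (u+d-1) + Nat.choose (u+d+(p+q)-1) (u+d) := by
        obtain ⟨m', hm'⟩ : ∃ m', u + d = m' + 1 := ⟨u+d-1, by omega⟩
        obtain ⟨s', hs'⟩ : ∃ s', p + q = s' + 1 := ⟨p+q-1, by omega⟩
        rw [hm', hs', show m' + 1 + (s'+1) - 1 = m'+s'+1 from by omega,
          show m' + 1 - 1 = m' from by omega,
          show m' + 1 + (s'+1) = (m'+s'+1)+1 from by omega,
          Nat.choose_succ_succ (m'+s'+1) m']
      rw [hP]
      push_cast
      linear_combination ((Nat.choose (u+d+(p+q)-1) (u+d-1) : ℤ) * (Nat.choose (p+q) p : ℤ))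
          * pm_pascal c u d hc hud hm0
        + ((Nat.choose (u+d+(p+q)-1) (u+d) : ℤ)
            * ((Nat.choose (u+d) u : ℤ) - (Nat.choose (u+d) (d+c) : ℤ)))
          * zeros_pascal p q hs0
def Rset (b : ℤ) : Set (Fin 4 → ℕ) := {w : Fin 4 → ℕ | (w 0 : ℤ) - (w 2 : ℤ) < b}

lemma mem_Rset {b : ℤ} {z : Fin 4 → ℕ} : z ∈ Rset b ↔ (z 0 : ℤ) - (z 2 : ℤ) < b := Iff.rfl

lemma Fcnt_eq_zero (c u p d q : ℕ) (h : d + c = u) : Fcnt c u p d q = 0 := by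
  unfold Fcnt; rw [h]; ring

lemma pathCount_formula (b : ℤ) (a : Fin 4 → ℕ) (c : ℕ) (hc : 0 < c)
    (hca : (c : ℤ) = b - ((a 0 : ℤ) - (a 2 : ℤ))) :
    ∀ t (x : Fin 4 → ℕ), (∑ i, x i) = t → a ≤ x → ((x 0 : ℤ) - (x 2 : ℤ) < b) →
    (pathCount (Rset b) a x : ℤ)
      = Fcnt c (x 0 - a 0) (x 1 - a 1) (x 2 - a 2) (x 3 - a 3) := by
  intro t
  induction t using Nat.strong_induction_on with
  | _ t IH =>
  intro x ht hax hxb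
  have h0 : a 0 ≤ x 0 := hax 0
  have h1 : a 1 ≤ x 1 := hax 1
  have h2 : a 2 ≤ x 2 := hax 2
  have h3 : a 3 ≤ x 3 := hax 3
  by_cases hxa : x = a
  · rw [hxa, pathCount_self (show a ∈ Rset b from by rw [mem_Rset]; omega)]
    simp [Fcnt, Nat.sub_self, Nat.choose_eq_zero_of_lt hc]
  · have hx : x ∈ Rset b := mem_Rset.2 hxb
    have H0 : ((if _ : 0 < x 0 then
          pathCount (Rset b) a (Function.update x 0 (x 0 - 1))
          else 0 : ℕ) : ℤ)
        = if 0 < x 0 - a 0 then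
            Fcnt c (x 0 - a 0 - 1) (x 1 - a 1) (x 2 - a 2) (x 3 - a 3) else 0 := by
      by_cases hu : 0 < x 0 - a 0
      · rw [dif_pos (show 0 < x 0 by omega), if_pos hu]
        have E0 : Function.update x 0 (x 0 - 1) 0 = x 0 - 1 := by simp
        have E1 : Function.update x 0 (x 0 - 1) 1 = x 1 := by simp
        have E2 : Function.update x 0 (x 0 - 1) 2 = x 2 := by simp
        have E3 : Function.update x 0 (x 0 - 1) 3 = x 3 := by simp
        have htpos : 0 < t := by have := sum_pos_of_coord x 0 (by omega); omega
        have hs' : ∑ k, Function.update x 0 (x 0 - 1) k = t - 1 := by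
          rw [sum_update_sub x 0 (by omega)]; omega
        have hax' : a ≤ Function.update x 0 (x 0 - 1) := le_update_of_lt hax 0 (by omega)
        have hR' : ((Function.update x 0 (x 0 - 1) 0 : ℕ) : ℤ)
            - ((Function.update x 0 (x 0 - 1) 2 : ℕ) : ℤ) < b := by rw [E0, E2]; omega
        rw [IH (t-1) (by omega) _ hs' hax' hR', E0, E1, E2, E3,
          show x 0 - 1 - a 0 = x 0 - a 0 - 1 from by omega]
      · rw [if_neg hu]
        by_cases hx0 : 0 < x 0
        · rw [dif_pos hx0,
            pathCount_eq_zero_of_lt 0 _ _ rfl (show _ < a 0 from by simp; omega)]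
          simp
        · rw [dif_neg hx0]; simp
    have H1 : ((if _ : 0 < x 1 then
          pathCount (Rset b) a (Function.update x 1 (x 1 - 1))
          else 0 : ℕ) : ℤ)
        = if 0 < x 1 - a 1 then
            Fcnt c (x 0 - a 0) (x 1 - a 1 - 1) (x 2 - a 2) (x 3 - a 3) else 0 := by
      by_cases hu : 0 < x 1 - a 1
      · rw [dif_pos (show 0 < x 1 by omega), if_pos hu]
        have E0 : Function.update x 1 (x 1 - 1) 0 = x 0 := by simp
        have E1 : Function.update x 1 (x 1 - 1) 1 = x 1 - 1 := by simp
        have E2 : Function.update x 1 (x 1 - 1) 2 = x 2 := by simp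
        have E3 : Function.update x 1 (x 1 - 1) 3 = x 3 := by simp
        have htpos : 0 < t := by have := sum_pos_of_coord x 1 (by omega); omega
        have hs' : ∑ k, Function.update x 1 (x 1 - 1) k = t - 1 := by
          rw [sum_update_sub x 1 (by omega)]; omega
        have hax' : a ≤ Function.update x 1 (x 1 - 1) := le_update_of_lt hax 1 (by omega)
        have hR' : ((Function.update x 1 (x 1 - 1) 0 : ℕ) : ℤ)
            - ((Function.update x 1 (x 1 - 1) 2 : ℕ) : ℤ) < b := by rw [E0, E2]; omega
        rw [IH (t-1) (by omega) _ hs' hax' hR', E0, E1, E2, E3,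
          show x 1 - 1 - a 1 = x 1 - a 1 - 1 from by omega]
      · rw [if_neg hu]
        by_cases hx1 : 0 < x 1
        · rw [dif_pos hx1,
            pathCount_eq_zero_of_lt 1 _ _ rfl (show _ < a 1 from by simp; omega)]
          simp
        · rw [dif_neg hx1]; simp
    have H2 : ((if _ : 0 < x 2 then
          pathCount (Rset b) a (Function.update x 2 (x 2 - 1))
          else 0 : ℕ) : ℤ)
        = if 0 < x 2 - a 2 then
            Fcnt c (x 0 - a 0) (x 1 - a 1) (x 2 - a 2 - 1) (x 3 - a 3) else 0 := by
      by_cases hu : 0 < x 2 - a 2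
      · rw [dif_pos (show 0 < x 2 by omega), if_pos hu]
        have E0 : Function.update x 2 (x 2 - 1) 0 = x 0 := by simp
        have E1 : Function.update x 2 (x 2 - 1) 1 = x 1 := by simp
        have E2 : Function.update x 2 (x 2 - 1) 2 = x 2 - 1 := by simp
        have E3 : Function.update x 2 (x 2 - 1) 3 = x 3 := by simp
        by_cases hR2 : (x 0 : ℤ) - (x 2 : ℤ) + 1 < b
        · have htpos : 0 < t := by have := sum_pos_of_coord x 2 (by omega); omega
          have hs' : ∑ k, Function.update x 2 (x 2 - 1) k = t - 1 := by
            rw [sum_update_sub x 2 (by omega)]; omega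
          have hax' : a ≤ Function.update x 2 (x 2 - 1) := le_update_of_lt hax 2 (by omega)
          have hR' : ((Function.update x 2 (x 2 - 1) 0 : ℕ) : ℤ)
              - ((Function.update x 2 (x 2 - 1) 2 : ℕ) : ℤ) < b := by rw [E0, E2]; omega
          rw [IH (t-1) (by omega) _ hs' hax' hR', E0, E1, E2, E3,
            show x 2 - 1 - a 2 = x 2 - a 2 - 1 from by omega]
        · have hnm : Function.update x 2 (x 2 - 1) ∉ Rset b := by
            rw [mem_Rset, E0, E2]; omega
          rw [pathCount_of_not_mem hnm,
            Fcnt_eq_zero c (x 0 - a 0) (x 1 - a 1) (x 2 - a 2 - 1) (x 3 - a 3) (by omega)]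
          simp
      · rw [if_neg hu]
        by_cases hx2 : 0 < x 2
        · rw [dif_pos hx2,
            pathCount_eq_zero_of_lt 2 _ _ rfl (show _ < a 2 from by simp; omega)]
          simp
        · rw [dif_neg hx2]; simp
    have H3 : ((if _ : 0 < x 3 then
          pathCount (Rset b) a (Function.update x 3 (x 3 - 1))
          else 0 : ℕ) : ℤ)
        = if 0 < x 3 - a 3 then
            Fcnt c (x 0 - a 0) (x 1 - a 1) (x 2 - a 2) (x 3 - a 3 - 1) else 0 := by
      by_cases hu : 0 < x 3 - a 3
      · rw [dif_pos (show 0 < x 3 by omega), if_pos hu]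
        have E0 : Function.update x 3 (x 3 - 1) 0 = x 0 := by simp
        have E1 : Function.update x 3 (x 3 - 1) 1 = x 1 := by simp
        have E2 : Function.update x 3 (x 3 - 1) 2 = x 2 := by simp
        have E3 : Function.update x 3 (x 3 - 1) 3 = x 3 - 1 := by simp
        have htpos : 0 < t := by have := sum_pos_of_coord x 3 (by omega); omega
        have hs' : ∑ k, Function.update x 3 (x 3 - 1) k = t - 1 := by
          rw [sum_update_sub x 3 (by omega)]; omega
        have hax' : a ≤ Function.update x 3 (x 3 - 1) := le_update_of_lt hax 3 (by omega)
        have hR' : ((Function.update x 3 (x 3 - 1) 0 : ℕ) : ℤ)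
            - ((Function.update x 3 (x 3 - 1) 2 : ℕ) : ℤ) < b := by rw [E0, E2]; omega
        rw [IH (t-1) (by omega) _ hs' hax' hR', E0, E1, E2, E3,
          show x 3 - 1 - a 3 = x 3 - a 3 - 1 from by omega]
      · rw [if_neg hu]
        by_cases hx3 : 0 < x 3
        · rw [dif_pos hx3,
            pathCount_eq_zero_of_lt 3 _ _ rfl (show _ < a 3 from by simp; omega)]
          simp
        · rw [dif_neg hx3]; simp
    rw [pathCount_rec hxa hx, Fin.sum_univ_four]
    push_cast
    rw [H0, H1, H2, H3]
    have hudc : x 0 - a 0 < (x 2 - a 2) + c := by omega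
    have hpos : 0 < (x 0 - a 0) + (x 1 - a 1) + (x 2 - a 2) + (x 3 - a 3) := by
      by_contra hcon
      exact hxa (funext_fin4 (by omega) (by omega) (by omega) (by omega))
    exact key_identity c _ _ _ _ hc hudc hpos

lemma final_identity (B u p d q : ℕ) (hB : 0 < B) (hd : 0 < d) (hu : u + 1 = B + d) :
    (B : ℤ) * ((u + p + d + q : ℕ) : ℤ) * Fcnt (B+1) u p (d-1) q
      = ((B : ℤ) + 1) * (d : ℤ) * Fcnt B u p d q := by
  unfold Fcnt
  rw [show d - 1 + (B+1) = u + 1 from by omega,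
      show d + B = u + 1 from by omega,
      show u + (d-1) = u + d - 1 from by omega,
      show u + p + (d-1) + q = u + p + d + q - 1 from by omega]
  obtain ⟨t, ht⟩ : ∃ t', u + p + d + q = t' + 1 := ⟨u+p+d+q-1, by omega⟩
  obtain ⟨m, hm⟩ : ∃ m', u + d = m' + 1 := ⟨u+d-1, by omega⟩
  rw [ht, hm]
  simp only [Nat.add_sub_cancel]
  have hB' : (B : ℤ) = (u : ℤ) + 1 - (d : ℤ) := by omega
  have f1 : ((t:ℤ)+1) * (Nat.choose t m : ℤ) = (Nat.choose (t+1) (m+1) : ℤ) * ((m:ℤ)+1) := by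
    exact_mod_cast Nat.add_one_mul_choose_eq t m
  have f2 : (Nat.choose (m+1) (u+1) : ℤ) * ((u:ℤ)+1) = (Nat.choose (m+1) u : ℤ) * (d:ℤ) := by
    have h := Nat.choose_succ_right_eq (m+1) u
    rw [show m + 1 - u = d from by omega] at h
    exact_mod_cast h
  have f3 : (Nat.choose m (u+1) : ℤ) * ((u:ℤ)+1) = (Nat.choose m u : ℤ) * ((d:ℤ)-1) := by
    have h := Nat.choose_succ_right_eq m u
    rw [show m - u = d - 1 from by omega] at h
    have h' : (Nat.choose m (u+1) : ℤ) * ((u:ℤ)+1) = (Nat.choose m u : ℤ) * ((d - 1 : ℕ) : ℤ) := by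
      exact_mod_cast h
    rw [h', show ((d - 1 : ℕ) : ℤ) = (d:ℤ) - 1 from by omega]
  have f4 : ((m:ℤ)+1) * (Nat.choose m u : ℤ) = (Nat.choose (m+1) (u+1) : ℤ) * ((u:ℤ)+1) := by
    exact_mod_cast Nat.add_one_mul_choose_eq m u
  apply mul_left_cancel₀ (show ((u:ℤ)+1) ≠ 0 from by positivity)
  rw [hB']
  push_cast
  linear_combination (-(((u:ℤ)+1-(d:ℤ))*((t:ℤ)+1)*(Nat.choose t m : ℤ)*(Nat.choose (p+q) p : ℤ))) * f3
    + ((((u:ℤ)+2-(d:ℤ))*(d:ℤ)*(Nat.choose (t+1) (m+1) : ℤ)*(Nat.choose (p+q) p : ℤ))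
        + (((u:ℤ)+1-(d:ℤ))*((u:ℤ)+2-(d:ℤ))*(Nat.choose (p+q) p : ℤ)*(Nat.choose (t+1) (m+1) : ℤ))) * f2
    + ((((u:ℤ)+1-(d:ℤ))*((u:ℤ)+2-(d:ℤ))*(Nat.choose (p+q) p : ℤ)*(Nat.choose m u : ℤ))) * f1
    + ((((u:ℤ)+1-(d:ℤ))*((u:ℤ)+2-(d:ℤ))*(Nat.choose (p+q) p : ℤ)*(Nat.choose (t+1) (m+1) : ℤ))) * f4


/-- Number of lattice paths from `a` to `y` all of whose points except `y`
lie in `R`. -/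
noncomputable def exitCount {k : ℕ} (R : Set (Fin k → ℕ)) (a y : Fin k → ℕ) : ℕ :=
  pathCount (insert y R) a y

/-- For `b > 0` and a boundary point `y ∈ ℕ⁴` with
`y₁ - y₃ = b` and `n = y₁ + y₂ + y₃ + y₄`, with `k(y)` the number of paths from
the origin staying in `R = {x : x₁ - x₃ < b}` except at `y`, and `k₃*(y)` the
number of such paths from `e₃`, one has
`b·(n-1)·k₃*(y) = (b+1)·y₃·k(y)`, i.e. `k₃*(y)/k(y) = ((b+1)/b)·y₃/(n-1)`. -/
theorem estimator_count_identity_e3 (b : ℤ) (hb : 0 < b) (y : Fin 4 → ℕ)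
    (hy : (y 0 : ℤ) - (y 2 : ℤ) = b) (n : ℕ) (hn : n = y 0 + y 1 + y 2 + y 3) :
    b * ((n : ℤ) - 1) *
        (exitCount {x : Fin 4 → ℕ | (x 0 : ℤ) - (x 2 : ℤ) < b}
          (Pi.single 2 1) y : ℤ)
      = (b + 1) * (y 2 : ℤ) *
        (exitCount {x : Fin 4 → ℕ | (x 0 : ℤ) - (x 2 : ℤ) < b} 0 y : ℤ) := by
  have hset : {x : Fin 4 → ℕ | (x 0 : ℤ) - (x 2 : ℤ) < b} = Rset b := rfl
  rw [hset]
  have hB : ((b.toNat : ℕ) : ℤ) = b := Int.toNat_of_nonneg hb.le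
  set B := b.toNat with hBdef
  have hBpos : 0 < B := by omega
  have hy0 : y 0 = y 2 + B := by omega
  have hy0pos : 0 < y 0 := by omega
  have he0 : (Pi.single 2 1 : Fin 4 → ℕ) 0 = 0 := by simp
  have he1 : (Pi.single 2 1 : Fin 4 → ℕ) 1 = 0 := by simp
  have he2 : (Pi.single 2 1 : Fin 4 → ℕ) 2 = 1 := by simp
  have he3 : (Pi.single 2 1 : Fin 4 → ℕ) 3 = 0 := by simp
  have F00 : Function.update y 0 (y 0 - 1) 0 = y 0 - 1 := by simp
  have F01 : Function.update y 0 (y 0 - 1) 1 = y 1 := by simp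
  have F02 : Function.update y 0 (y 0 - 1) 2 = y 2 := by simp
  have F03 : Function.update y 0 (y 0 - 1) 3 = y 3 := by simp
  have F10 : Function.update y 1 (y 1 - 1) 0 = y 0 := by simp
  have F11 : Function.update y 1 (y 1 - 1) 1 = y 1 - 1 := by simp
  have F12 : Function.update y 1 (y 1 - 1) 2 = y 2 := by simp
  have F20 : Function.update y 2 (y 2 - 1) 0 = y 0 := by simp
  have F22 : Function.update y 2 (y 2 - 1) 2 = y 2 - 1 := by simp
  have F30 : Function.update y 3 (y 3 - 1) 0 = y 0 := by simp
  have F32 : Function.update y 3 (y 3 - 1) 2 = y 2 := by simp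
  have F33 : Function.update y 3 (y 3 - 1) 3 = y 3 - 1 := by simp
  have hya0 : y ≠ (0 : Fin 4 → ℕ) := by
    intro h; rw [h] at hy0pos; simp at hy0pos
  have hyae : y ≠ (Pi.single 2 1 : Fin 4 → ℕ) := by
    intro h
    have := congrFun h 0
    rw [he0] at this; omega
  have hnotle0 : ¬ y ≤ Function.update y 0 (y 0 - 1) := by
    intro hle
    have h' : y 0 ≤ y 0 - 1 := by have := hle 0; rwa [F00] at this
    omega
  -- the three vanishing terms (for either starting point)
  have hzero1 : ∀ a : Fin 4 → ℕ, 0 < y 1 →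
      pathCount (insert y (Rset b)) a (Function.update y 1 (y 1 - 1)) = 0 := by
    intro a h1
    have hne : Function.update y 1 (y 1 - 1) ≠ y := by
      intro h
      have := congrFun h 1; rw [F11] at this; omega
    apply pathCount_of_not_mem
    intro hmem
    rcases Set.mem_insert_iff.1 hmem with h' | h'
    · exact hne h'
    · rw [mem_Rset, F10, F12] at h'; omega
  have hzero2 : ∀ a : Fin 4 → ℕ, 0 < y 2 →
      pathCount (insert y (Rset b)) a (Function.update y 2 (y 2 - 1)) = 0 := by
    intro a h1
    have hne : Function.update y 2 (y 2 - 1) ≠ y := by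
      intro h
      have h2 := congrFun h 2; rw [F22] at h2
      omega
    apply pathCount_of_not_mem
    intro hmem
    rcases Set.mem_insert_iff.1 hmem with h' | h'
    · exact hne h'
    · rw [mem_Rset, F20, F22] at h'; omega
  have hzero3 : ∀ a : Fin 4 → ℕ, 0 < y 3 →
      pathCount (insert y (Rset b)) a (Function.update y 3 (y 3 - 1)) = 0 := by
    intro a h1
    have hne : Function.update y 3 (y 3 - 1) ≠ y := by
      intro h
      have := congrFun h 3; rw [F33] at this; omega
    apply pathCount_of_not_mem
    intro hmem
    rcases Set.mem_insert_iff.1 hmem with h' | h'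
    · exact hne h'
    · rw [mem_Rset, F30, F32] at h'; omega
  -- the count from the origin
  have hk : ((exitCount (Rset b) 0 y : ℕ) : ℤ) = Fcnt B (y 0 - 1) (y 1) (y 2) (y 3) := by
    unfold exitCount
    rw [pathCount_rec hya0 (Set.mem_insert y _), Fin.sum_univ_four]
    push_cast
    rw [dif_pos hy0pos,
      pathCount_insert_of_not_le _ _ rfl hnotle0]
    have hz0R : ((Function.update y 0 (y 0 - 1) 0 : ℕ) : ℤ)
        - ((Function.update y 0 (y 0 - 1) 2 : ℕ) : ℤ) < b := by
      rw [F00, F02]; omega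
    rw [pathCount_formula b 0 B hBpos (by simp [hB]) _ _ rfl
        (fun i => Nat.zero_le _) hz0R, F00, F01, F02, F03]
    have hr1 : ((if _ : 0 < y 1 then
        pathCount (insert y (Rset b)) 0 (Function.update y 1 (y 1 - 1)) else 0 : ℕ) : ℤ) = 0 := by
      split_ifs with h
      · rw [hzero1 _ h]; simp
      · simp
    have hr2 : ((if _ : 0 < y 2 then
        pathCount (insert y (Rset b)) 0 (Function.update y 2 (y 2 - 1)) else 0 : ℕ) : ℤ) = 0 := by
      split_ifs with h
      · rw [hzero2 _ h]; simp
      · simp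
    have hr3 : ((if _ : 0 < y 3 then
        pathCount (insert y (Rset b)) 0 (Function.update y 3 (y 3 - 1)) else 0 : ℕ) : ℤ) = 0 := by
      split_ifs with h
      · rw [hzero3 _ h]; simp
      · simp
    rw [hr1, hr2, hr3]
    simp
  rcases Nat.eq_zero_or_pos (y 2) with hy2 | hy2
  · -- y 2 = 0 : the count from e₃ vanishes
    have hk3 : exitCount (Rset b) (Pi.single 2 1) y = 0 := by
      unfold exitCount
      rw [pathCount_rec hyae (Set.mem_insert y _)]
      apply Finset.sum_eq_zero
      intro i _
      split_ifs with hi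
      · have hi2 : i ≠ 2 := by intro h; rw [h] at hi; omega
        refine pathCount_eq_zero_of_lt 2 _ _ rfl ?_
        rw [Function.update_of_ne (Ne.symm hi2), he2]
        omega
      · rfl
    rw [hk3, hy2]
    push_cast
    ring
  · -- main case
    have hk3 : ((exitCount (Rset b) (Pi.single 2 1) y : ℕ) : ℤ)
        = Fcnt (B+1) (y 0 - 1) (y 1) (y 2 - 1) (y 3) := by
      unfold exitCount
      rw [pathCount_rec hyae (Set.mem_insert y _), Fin.sum_univ_four]
      push_cast
      rw [dif_pos hy0pos,
        pathCount_insert_of_not_le _ _ rfl hnotle0]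
      have hz0R : ((Function.update y 0 (y 0 - 1) 0 : ℕ) : ℤ)
          - ((Function.update y 0 (y 0 - 1) 2 : ℕ) : ℤ) < b := by
        rw [F00, F02]; omega
      have hca : ((B + 1 : ℕ) : ℤ)
          = b - (((Pi.single 2 1 : Fin 4 → ℕ) 0 : ℤ) - ((Pi.single 2 1 : Fin 4 → ℕ) 2 : ℤ)) := by
        rw [he0, he2]; push_cast; omega
      have hle : (Pi.single 2 1 : Fin 4 → ℕ) ≤ Function.update y 0 (y 0 - 1) :=
        le_fin4 (by rw [he0]; exact Nat.zero_le _) (by rw [he1]; exact Nat.zero_le _)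
          (by rw [he2, F02]; omega) (by rw [he3]; exact Nat.zero_le _)
      rw [pathCount_formula b (Pi.single 2 1) (B+1) (by omega) hca _ _ rfl hle hz0R,
        F00, F01, F02, F03, he0, he1, he2, he3]
      have hr1 : ((if _ : 0 < y 1 then
          pathCount (insert y (Rset b)) (Pi.single 2 1) (Function.update y 1 (y 1 - 1)) else 0 : ℕ) : ℤ) = 0 := by
        split_ifs with h
        · rw [hzero1 _ h]; simp
        · simp
      have hr2 : ((if _ : 0 < y 2 then
          pathCount (insert y (Rset b)) (Pi.single 2 1) (Function.update y 2 (y 2 - 1)) else 0 : ℕ) : ℤ) = 0 := by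
        split_ifs with h
        · rw [hzero2 _ h]; simp
        · exact absurd hy2 h
      have hr3 : ((if _ : 0 < y 3 then
          pathCount (insert y (Rset b)) (Pi.single 2 1) (Function.update y 3 (y 3 - 1)) else 0 : ℕ) : ℤ) = 0 := by
        split_ifs with h
        · rw [hzero3 _ h]; simp
        · simp
      rw [hr1, hr2, hr3]
      simp
    rw [hk, hk3]
    have hn1 : ((y 0 - 1 + y 1 + y 2 + y 3 : ℕ) : ℤ) = (n : ℤ) - 1 := by omega
    rw [← hB, ← hn1]
    exact final_identity B (y 0 - 1) (y 1) (y 2) (y 3) hBpos hy2 (by omega)
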